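/- Strong Equivalence Characterisation: For any two AC-programs Π₁ and Π₂ (over a common semiring signature), Π₁ and Π₂ are strongly equivalent — i.e., for every AC-program Π', the equilibrium models of Π₁ ∪ Π' and Π₂ ∪ Π' coincide — if and only if Π₁ and Π₂ have the same HT-models, i.e., the same satisfying pointed HT-interpretations. -/

import Mathlib

/-- The two worlds of HT logic. -/
inductive W : Type | H | T
deriving DecidableEq

/-- `W.le w w'` means `w' ≥ w` in the HT order (with `T ≥ H`). -/
def W.le : W → W → Prop
  | .H, _ => True
  | .T, w' => w' = .T

/-- An HT-interpretation: a pair of sets of (variable-free) atoms with `h ⊆ t`. -/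
structure HTI (A : Type*) where
  h : Set A
  t : Set A
  sub : h ⊆ t

/-- The component of a pointed HT-interpretation at world `w`. -/
def HTI.at {A : Type*} (I : HTI A) : W → Set A
  | .H => I.h
  | .T => I.t

/-- Variable-free atoms: a predicate applied to a list of domain elements (the
    domain being the carrier of the semiring `R`). -/
abbrev GAtom (P R : Type) : Type := P × List R

/-- Quantifier-free σ-formulas occurring inside weighted formulas of an `AC`-rule
    with `g` global and `l` local variables; atom arguments are global variables,
    local variables, or constants. -/
inductive BF (P R : Type) (g l : ℕ) : Type
  | bot
  | atom (p : P) (args : List (Fin g ⊕ Fin l ⊕ R))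
  | impl (φ ψ : BF P R g l)
  | or (φ ψ : BF P R g l)
  | and (φ ψ : BF P R g l)

/-- The value of an atom argument under assignments `γ`, `lam` to the global and
    local variables. -/
def argVal {R : Type} {g l : ℕ} (γ : Fin g → R) (lam : Fin l → R) :
    Fin g ⊕ Fin l ⊕ R → R :=
  Sum.elim γ (Sum.elim lam id)

/-- HT satisfaction of σ-formulas under assignments `γ`, `lam`. -/
def BF.sat {P R : Type} {g l : ℕ} (I : HTI (GAtom P R)) (γ : Fin g → R)
    (lam : Fin l → R) : W → BF P R g l → Prop
  | _, .bot => False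
  | w, .atom p args => (p, args.map (argVal γ lam)) ∈ I.at w
  | w, .impl φ ψ => ∀ w', W.le w w' → (BF.sat I γ lam w' φ → BF.sat I γ lam w' ψ)
  | w, .or φ ψ => BF.sat I γ lam w φ ∨ BF.sat I γ lam w ψ
  | w, .and φ ψ => BF.sat I γ lam w φ ∧ BF.sat I γ lam w ψ

/-- Quantifier-free weighted σ-formulas over the semiring `R`, with `g` global
    and `l` local variables. -/
inductive WT (P R : Type) (g l : ℕ) : Type
  | const (k : R)
  | gvar (x : Fin g)
  | lvar (y : Fin l)
  | form (φ : BF P R g l)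
  | wimpl (α β : WT P R g l)
  | add (α β : WT P R g l)
  | mul (α β : WT P R g l)
  | neg (α : WT P R g l)
  | inv (α : WT P R g l)

open Classical in
/-- Value of a weighted σ-formula (`nO`, `iO` interpret `−`, `⁻¹`;
    `e_⊗ = 1`, `e_⊕ = 0`). -/
noncomputable def WT.val {P R : Type} [Semiring R] (nO iO : R → R) {g l : ℕ}
    (I : HTI (GAtom P R)) (γ : Fin g → R) (lam : Fin l → R) : W → WT P R g l → R
  | _, .const k => k
  | _, .gvar x => γ x
  | _, .lvar y => lam y
  | w, .form φ => if BF.sat I γ lam w φ then 1 else 0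
  | w, .wimpl α β =>
      if ∀ w', W.le w w' →
        (WT.val nO iO I γ lam w' α = 0 ∨ WT.val nO iO I γ lam w' β ≠ 0)
        then 1 else 0
  | w, .add α β => WT.val nO iO I γ lam w α + WT.val nO iO I γ lam w β
  | w, .mul α β => WT.val nO iO I γ lam w α * WT.val nO iO I γ lam w β
  | w, .neg α => nO (WT.val nO iO I γ lam w α)
  | w, .inv α => iO (WT.val nO iO I γ lam w α)

/-- The comparison operators `∼ ∈ {>, ≥, =, ≤, <, ≯, ≱, ≠, ≰, ≮}`. -/
inductive CmpOp : Type | gt | ge | eq | le | lt | ngt | nge | ne | nle | nlt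

/-- Interpretation of a comparison w.r.t. a strict order `ltR` on the semiring:
    `interp ltR op k v` is "`k ∼ v`". -/
def CmpOp.interp {R : Type} (ltR : R → R → Prop) : CmpOp → R → R → Prop
  | .gt => fun k v => ltR v k
  | .ge => fun k v => ltR v k ∨ k = v
  | .eq => fun k v => k = v
  | .le => fun k v => ltR k v ∨ k = v
  | .lt => fun k v => ltR k v
  | .ngt => fun k v => ¬ ltR v k
  | .nge => fun k v => ¬ (ltR v k ∨ k = v)
  | .ne => fun k v => k ≠ v
  | .nle => fun k v => ¬ (ltR k v ∨ k = v)
  | .nlt => fun k v => ¬ ltR k v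

/-- An algebraic constraint `lhs ∼_R Σȳ α(x̄, ȳ)` with `l` local variables; `lhs`
    is a global variable or a semiring constant. -/
structure Constr (P R : Type) (g : ℕ) : Type where
  l : ℕ
  lhs : Fin g ⊕ R
  op : CmpOp
  wf : WT P R g l

/-- `⟦(α)^Σ⟧`: the `⊕`-sum over all assignments of the local variables ranging
    over `Dom` (the grounding domain; `Dom = Set.univ` for the full program). -/
noncomputable def Constr.sval {P R : Type} [Semiring R] (nO iO : R → R)
    (Dom : Set R) {g : ℕ} (c : Constr P R g) (γ : Fin g → R)
    (I : HTI (GAtom P R)) (w : W) : R :=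
  ∑ᶠ lam ∈ {lam : Fin c.l → R | ∀ j, lam j ∈ Dom},
    WT.val nO iO I γ lam w c.wf

/-- Satisfaction of an algebraic constraint at `I_w`:
    `lhs ∼ ⟦(α)^Σ⟧(I_{w'})` for all `w' ≥ w`. -/
def Constr.csat {P R : Type} [Semiring R] (nO iO : R → R) (ltR : R → R → Prop)
    (Dom : Set R) {g : ℕ} (c : Constr P R g) (γ : Fin g → R)
    (I : HTI (GAtom P R)) (w : W) : Prop :=
  ∀ w', W.le w w' →
    (c.op.interp ltR) (Sum.elim γ id c.lhs) (c.sval nO iO Dom γ I w')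

/-- A part of an `AC`-rule: a σ-atom or an algebraic constraint. -/
inductive RPart (P R : Type) (g : ℕ) : Type
  | atom (p : P) (args : List (Fin g ⊕ R))
  | constr (c : Constr P R g)

/-- Satisfaction of a rule part at `I_w` under the assignment `γ`. -/
def RPart.psat {P R : Type} [Semiring R] (nO iO : R → R) (ltR : R → R → Prop)
    (Dom : Set R) {g : ℕ} (γ : Fin g → R) (I : HTI (GAtom P R)) (w : W) :
    RPart P R g → Prop
  | .atom p args => (p, args.map (Sum.elim γ id)) ∈ I.at w
  | .constr c => c.csat nO iO ltR Dom γ I w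

/-- An `AC`-rule `φ ← ψ₁, …, ψₙ, ¬θ₁, …, ¬θ_m` with `g` global variables. -/
structure Rule (P R : Type) : Type where
  g : ℕ
  head : RPart P R g
  pos : List (RPart P R g)
  neg : List (RPart P R g)

/-- HT satisfaction of an `AC`-rule at `I_w`: global variables are universally
    quantified over `Dom`, and `(B_∧(r) → φ)^Σ` is evaluated as an HT implication
    (negated body parts `¬θ` being satisfied at `w'` iff `θ` fails at all
    `w'' ≥ w'`). -/
def Rule.rsat {P R : Type} [Semiring R] (nO iO : R → R) (ltR : R → R → Prop)
    (Dom : Set R) (I : HTI (GAtom P R)) (w : W) (r : Rule P R) : Prop :=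
  ∀ γ : Fin r.g → R, (∀ x, γ x ∈ Dom) →
    ∀ w', W.le w w' →
      ((∀ p ∈ r.pos, RPart.psat nO iO ltR Dom γ I w' p) ∧
        (∀ p ∈ r.neg, ∀ w'', W.le w' w'' →
          ¬ RPart.psat nO iO ltR Dom γ I w'' p)) →
      RPart.psat nO iO ltR Dom γ I w' r.head

/-- HT satisfaction of an `AC`-program. -/
def progSat {P R : Type} [Semiring R] (nO iO : R → R) (ltR : R → R → Prop)
    (Dom : Set R) (Pr : Set (Rule P R)) (I : HTI (GAtom P R)) (w : W) : Prop :=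
  ∀ r ∈ Pr, r.rsat nO iO ltR Dom I w

/-- `J` is an equilibrium model of the `AC`-program `Pr`. -/
def EqModel {P R : Type} [Semiring R] (nO iO : R → R) (ltR : R → R → Prop)
    (Dom : Set R) (Pr : Set (Rule P R)) (J : Set (GAtom P R)) : Prop :=
  progSat nO iO ltR Dom Pr ⟨J, J, le_refl J⟩ .H ∧
    ∀ J' (h : J' ⊆ J), J' ≠ J → ¬ progSat nO iO ltR Dom Pr ⟨J', J, h⟩ .H

/-- `Π₁` and `Π₂` are strongly equivalent: for every `AC`-program `Π'`, the
    equilibrium models of `Π₁ ∪ Π'` and `Π₂ ∪ Π'` coincide. -/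
def StrongEq {P R : Type} [Semiring R] (nO iO : R → R) (ltR : R → R → Prop)
    (P1 P2 : Set (Rule P R)) : Prop :=
  ∀ Pr : Set (Rule P R), ∀ J : Set (GAtom P R),
    EqModel nO iO ltR Set.univ (P1 ∪ Pr) J ↔ EqModel nO iO ltR Set.univ (P2 ∪ Pr) J

/-! ### Auxiliary lemmas -/

section Aux

variable {P R : Type} [Semiring R]

lemma W.le_T' (w : W) : W.le w .T := by cases w <;> simp [W.le]

lemma HTI.ext' {A : Type*} {I I' : HTI A} (h1 : I.h = I'.h) (h2 : I.t = I'.t) :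
    I = I' := by cases I; cases I'; simp_all

lemma HTI.at_total {A : Type*} {I : HTI A} (hh : I.h = I.t) (w : W) :
    I.at w = I.t := by cases w <;> simp [HTI.at, hh]


lemma ite_congr_prop {α : Sort*} {c d : Prop} {i1 : Decidable c}
    {i2 : Decidable d} (h : c ↔ d) (a b : α) :
    (@ite _ c i1 a b) = (@ite _ d i2 a b) := by
  cases propext h
  rw [Subsingleton.elim i1 i2]

/-- At world `T`, satisfaction only depends on the `t`-component. -/
lemma bf_sat_T {g l : ℕ} {I I' : HTI (GAtom P R)} (ht : I.t = I'.t)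
    (γ : Fin g → R) (lam : Fin l → R) :
    ∀ φ : BF P R g l, BF.sat I γ lam .T φ ↔ BF.sat I' γ lam .T φ := by
  intro φ
  induction φ with
  | bot => simp [BF.sat]
  | atom p args => simp [BF.sat, HTI.at, ht]
  | impl φ ψ ihφ ihψ =>
    simp only [BF.sat]
    constructor
    · intro h w' hw'
      have hw : w' = .T := hw'
      subst hw
      rw [← ihφ, ← ihψ]; exact h .T rfl
    · intro h w' hw'
      have hw : w' = .T := hw'
      subst hw
      rw [ihφ, ihψ]; exact h .T rfl
  | or φ ψ ihφ ihψ => simp [BF.sat, ihφ, ihψ]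
  | and φ ψ ihφ ihψ => simp [BF.sat, ihφ, ihψ]

lemma wt_val_T (nO iO : R → R) {g l : ℕ} {I I' : HTI (GAtom P R)}
    (ht : I.t = I'.t) (γ : Fin g → R) (lam : Fin l → R) :
    ∀ α : WT P R g l, WT.val nO iO I γ lam .T α = WT.val nO iO I' γ lam .T α := by
  intro α
  induction α with
  | const k => simp [WT.val]
  | gvar x => simp [WT.val]
  | lvar y => simp [WT.val]
  | form φ =>
    simp only [WT.val]
    exact ite_congr_prop (bf_sat_T ht γ lam φ) _ _
  | wimpl α β ihα ihβ =>
    simp only [WT.val]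
    refine ite_congr_prop ?_ _ _
    constructor
    · intro h w' hw'
      have hw : w' = .T := hw'
      subst hw
      rw [← ihα, ← ihβ]; exact h .T rfl
    · intro h w' hw'
      have hw : w' = .T := hw'
      subst hw
      rw [ihα, ihβ]; exact h .T rfl
  | add α β ihα ihβ => simp [WT.val, ihα, ihβ]
  | mul α β ihα ihβ => simp [WT.val, ihα, ihβ]
  | neg α ihα => simp [WT.val, ihα]
  | inv α ihα => simp [WT.val, ihα]

/-- For total interpretations, satisfaction at any world agrees with world `T`. -/
lemma bf_sat_total {g l : ℕ} {I : HTI (GAtom P R)} (hh : I.h = I.t)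
    (γ : Fin g → R) (lam : Fin l → R) (φ : BF P R g l) :
    ∀ w, BF.sat I γ lam w φ ↔ BF.sat I γ lam .T φ := by
  induction φ with
  | bot => intro w; simp [BF.sat]
  | atom p args => intro w; simp [BF.sat, HTI.at_total hh]
  | impl φ ψ ihφ ihψ =>
    intro w
    simp only [BF.sat]
    constructor
    · intro h w' hw'
      have hw : w' = .T := hw'
      subst hw
      exact h .T (W.le_T' w)
    · intro h w' _
      rw [ihφ w', ihψ w']
      exact h .T rfl
  | or φ ψ ihφ ihψ => intro w; simp [BF.sat, ihφ, ihψ]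
  | and φ ψ ihφ ihψ => intro w; simp [BF.sat, ihφ, ihψ]

lemma wt_val_total (nO iO : R → R) {g l : ℕ} {I : HTI (GAtom P R)}
    (hh : I.h = I.t) (γ : Fin g → R) (lam : Fin l → R) (α : WT P R g l) :
    ∀ w, WT.val nO iO I γ lam w α = WT.val nO iO I γ lam .T α := by
  induction α with
  | const k => intro w; simp [WT.val]
  | gvar x => intro w; simp [WT.val]
  | lvar y => intro w; simp [WT.val]
  | form φ =>
    intro w
    simp only [WT.val]
    exact ite_congr_prop (bf_sat_total hh γ lam φ w) _ _
  | wimpl α β ihα ihβ =>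
    intro w
    simp only [WT.val]
    refine ite_congr_prop ?_ _ _
    constructor
    · intro h w' hw'
      have hw : w' = .T := hw'
      subst hw
      exact h .T (W.le_T' w)
    · intro h w' _
      rw [ihα w', ihβ w']
      exact h .T rfl
  | add α β ihα ihβ => intro w; simp [WT.val, ihα, ihβ]
  | mul α β ihα ihβ => intro w; simp [WT.val, ihα, ihβ]
  | neg α ihα => intro w; simp [WT.val, ihα]
  | inv α ihα => intro w; simp [WT.val, ihα]

lemma sval_T (nO iO : R → R) (Dom : Set R) {g : ℕ} {I I' : HTI (GAtom P R)}
    (ht : I.t = I'.t) (c : Constr P R g) (γ : Fin g → R) :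
    c.sval nO iO Dom γ I .T = c.sval nO iO Dom γ I' .T := by
  unfold Constr.sval
  exact finsum_mem_congr rfl fun lam _ => wt_val_T nO iO ht γ lam c.wf

lemma sval_total (nO iO : R → R) (Dom : Set R) {g : ℕ} {I : HTI (GAtom P R)}
    (hh : I.h = I.t) (c : Constr P R g) (γ : Fin g → R) (w : W) :
    c.sval nO iO Dom γ I w = c.sval nO iO Dom γ I .T := by
  unfold Constr.sval
  exact finsum_mem_congr rfl fun lam _ => wt_val_total nO iO hh γ lam c.wf w

lemma csat_T (nO iO : R → R) (ltR : R → R → Prop) (Dom : Set R) {g : ℕ}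
    {I I' : HTI (GAtom P R)} (ht : I.t = I'.t) (c : Constr P R g)
    (γ : Fin g → R) :
    c.csat nO iO ltR Dom γ I .T ↔ c.csat nO iO ltR Dom γ I' .T := by
  unfold Constr.csat
  constructor
  · intro h w' hw'
    have hw : w' = .T := hw'
    subst hw
    rw [← sval_T nO iO Dom ht c γ]; exact h .T rfl
  · intro h w' hw'
    have hw : w' = .T := hw'
    subst hw
    rw [sval_T nO iO Dom ht c γ]; exact h .T rfl

lemma csat_total (nO iO : R → R) (ltR : R → R → Prop) (Dom : Set R) {g : ℕ}
    {I : HTI (GAtom P R)} (hh : I.h = I.t) (c : Constr P R g)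
    (γ : Fin g → R) (w : W) :
    c.csat nO iO ltR Dom γ I w ↔ c.csat nO iO ltR Dom γ I .T := by
  unfold Constr.csat
  constructor
  · intro h w' hw'
    have hw : w' = .T := hw'
    subst hw
    exact h .T (W.le_T' w)
  · intro h w' _
    rw [sval_total nO iO Dom hh c γ w']
    exact h .T rfl

lemma psat_T (nO iO : R → R) (ltR : R → R → Prop) (Dom : Set R) {g : ℕ}
    {I I' : HTI (GAtom P R)} (ht : I.t = I'.t) (γ : Fin g → R)
    (p : RPart P R g) :
    p.psat nO iO ltR Dom γ I .T ↔ p.psat nO iO ltR Dom γ I' .T := by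
  cases p with
  | atom q args => simp [RPart.psat, HTI.at, ht]
  | constr c => exact csat_T nO iO ltR Dom ht c γ

lemma psat_total (nO iO : R → R) (ltR : R → R → Prop) (Dom : Set R) {g : ℕ}
    {I : HTI (GAtom P R)} (hh : I.h = I.t) (γ : Fin g → R)
    (p : RPart P R g) (w : W) :
    p.psat nO iO ltR Dom γ I w ↔ p.psat nO iO ltR Dom γ I .T := by
  cases p with
  | atom q args => simp [RPart.psat, HTI.at_total hh]
  | constr c => exact csat_total nO iO ltR Dom hh c γ w

lemma rsat_T_mp (nO iO : R → R) (ltR : R → R → Prop) (Dom : Set R)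
    {I I' : HTI (GAtom P R)} (ht : I.t = I'.t) {r : Rule P R}
    (h : r.rsat nO iO ltR Dom I .T) : r.rsat nO iO ltR Dom I' .T := by
  intro γ hγ w' hw' hbody
  have hw : w' = .T := hw'
  subst hw
  refine (psat_T nO iO ltR Dom ht γ r.head).mp ?_
  refine h γ hγ .T rfl ⟨?_, ?_⟩
  · intro p hp
    exact (psat_T nO iO ltR Dom ht γ p).mpr (hbody.1 p hp)
  · intro p hp w'' hw'' hps
    have hw2 : w'' = .T := hw''
    subst hw2
    exact hbody.2 p hp .T rfl ((psat_T nO iO ltR Dom ht γ p).mp hps)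

lemma rsat_total (nO iO : R → R) (ltR : R → R → Prop) (Dom : Set R)
    {I : HTI (GAtom P R)} (hh : I.h = I.t) (r : Rule P R) (w : W) :
    r.rsat nO iO ltR Dom I w ↔ r.rsat nO iO ltR Dom I .T := by
  constructor
  · intro h γ hγ w' hw' hbody
    have hw : w' = .T := hw'
    subst hw
    exact h γ hγ .T (W.le_T' w) hbody
  · intro h γ hγ w' _ hbody
    refine (psat_total nO iO ltR Dom hh γ r.head w').mpr ?_
    refine h γ hγ .T rfl ⟨?_, ?_⟩
    · intro p hp
      exact (psat_total nO iO ltR Dom hh γ p w').mp (hbody.1 p hp)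
    · intro p hp w'' hw'' hps
      have hw2 : w'' = .T := hw''
      subst hw2
      exact hbody.2 p hp .T (W.le_T' w') hps

lemma progSat_T_congr (nO iO : R → R) (ltR : R → R → Prop) (Dom : Set R)
    {I I' : HTI (GAtom P R)} (ht : I.t = I'.t) (Pr : Set (Rule P R)) :
    progSat nO iO ltR Dom Pr I .T ↔ progSat nO iO ltR Dom Pr I' .T :=
  ⟨fun h r hr => rsat_T_mp nO iO ltR Dom ht (h r hr),
   fun h r hr => rsat_T_mp nO iO ltR Dom ht.symm (h r hr)⟩

lemma progSat_total (nO iO : R → R) (ltR : R → R → Prop) (Dom : Set R)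
    {I : HTI (GAtom P R)} (hh : I.h = I.t) (Pr : Set (Rule P R)) (w : W) :
    progSat nO iO ltR Dom Pr I w ↔ progSat nO iO ltR Dom Pr I .T :=
  forall₂_congr fun r _ => rsat_total nO iO ltR Dom hh r w

lemma progSat_persist (nO iO : R → R) (ltR : R → R → Prop) (Dom : Set R)
    {I : HTI (GAtom P R)} (Pr : Set (Rule P R))
    (h : progSat nO iO ltR Dom Pr I .H) : progSat nO iO ltR Dom Pr I .T := by
  intro r hr γ hγ w' hw' hbody
  have hw : w' = .T := hw'
  subst hw
  exact h r hr γ hγ .T trivial hbody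

lemma progSat_T_iff (nO iO : R → R) (ltR : R → R → Prop) (Dom : Set R)
    (I : HTI (GAtom P R)) (Pr : Set (Rule P R)) :
    progSat nO iO ltR Dom Pr I .T ↔
      progSat nO iO ltR Dom Pr ⟨I.t, I.t, le_refl I.t⟩ .H := by
  exact (progSat_T_congr nO iO ltR Dom (I := I)
      (I' := ⟨I.t, I.t, le_refl I.t⟩) rfl Pr).trans
    ((progSat_total nO iO ltR Dom (I := ⟨I.t, I.t, le_refl I.t⟩) rfl Pr .H).symm)

lemma progSat_union (nO iO : R → R) (ltR : R → R → Prop) (Dom : Set R)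
    (P1 Pr : Set (Rule P R)) (I : HTI (GAtom P R)) (w : W) :
    progSat nO iO ltR Dom (P1 ∪ Pr) I w ↔
      progSat nO iO ltR Dom P1 I w ∧ progSat nO iO ltR Dom Pr I w := by
  simp [progSat, Set.mem_union, or_imp, forall_and]

/-! ### The counterexample programs -/

/-- The fact `a ←`. -/
def factRule (a : GAtom P R) : Rule P R :=
  ⟨0, .atom a.1 (a.2.map Sum.inr), [], []⟩

/-- The rule `a ← b`. -/
def implRule (a b : GAtom P R) : Rule P R :=
  ⟨0, .atom a.1 (a.2.map Sum.inr), [.atom b.1 (b.2.map Sum.inr)], []⟩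

lemma psat_atomPart (nO iO : R → R) (ltR : R → R → Prop) (Dom : Set R)
    (γ : Fin 0 → R) (a : GAtom P R) (I : HTI (GAtom P R)) (w : W) :
    RPart.psat nO iO ltR Dom γ I w (.atom a.1 (a.2.map Sum.inr)) ↔
      a ∈ I.at w := by
  simp [RPart.psat, List.map_map]

lemma rsat_factRule (nO iO : R → R) (ltR : R → R → Prop)
    (a : GAtom P R) (I : HTI (GAtom P R)) :
    (factRule a).rsat nO iO ltR Set.univ I .H ↔ a ∈ I.h := by
  constructor
  · intro h
    have := h (fun x => x.elim0) (fun x => x.elim0) .H trivial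
      ⟨(by intro p hp; cases hp), (by intro p hp; cases hp)⟩
    exact (psat_atomPart nO iO ltR Set.univ _ a I .H).mp this
  · intro ha γ hγ w' hw' _
    refine (psat_atomPart nO iO ltR Set.univ γ a I w').mpr ?_
    cases w' with
    | H => exact ha
    | T => exact I.sub ha

lemma rsat_implRule (nO iO : R → R) (ltR : R → R → Prop)
    (a b : GAtom P R) (I : HTI (GAtom P R)) :
    (implRule a b).rsat nO iO ltR Set.univ I .H ↔
      ((b ∈ I.h → a ∈ I.h) ∧ (b ∈ I.t → a ∈ I.t)) := by
  constructor
  · intro h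
    constructor
    · intro hb
      refine (psat_atomPart nO iO ltR Set.univ (fun x => x.elim0) a I .H).mp ?_
      refine h (fun x => x.elim0) (fun x => x.elim0) .H trivial
        ⟨?_, by intro p hp; cases hp⟩
      intro p hp
      simp only [implRule, List.mem_singleton] at hp
      obtain _ | ⟨_, ⟨⟩⟩ := hp
      exact (psat_atomPart nO iO ltR Set.univ (fun x => x.elim0) b I .H).mpr hb
    · intro hb
      refine (psat_atomPart nO iO ltR Set.univ (fun x => x.elim0) a I .T).mp ?_
      refine h (fun x => x.elim0) (fun x => x.elim0) .T trivial
        ⟨?_, by intro p hp; cases hp⟩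
      intro p hp
      simp only [implRule, List.mem_singleton] at hp
      obtain _ | ⟨_, ⟨⟩⟩ := hp
      exact (psat_atomPart nO iO ltR Set.univ (fun x => x.elim0) b I .T).mpr hb
  · rintro ⟨h1, h2⟩ γ hγ w' hw' ⟨hpos, _⟩
    have hb := hpos (.atom b.1 (b.2.map Sum.inr)) (List.Mem.head _)
    replace hb := (psat_atomPart nO iO ltR Set.univ γ b I w').mp hb
    refine (psat_atomPart nO iO ltR Set.univ γ a I w').mpr ?_
    cases w' with
    | H => exact h1 hb
    | T => exact h2 hb

/-- Key lemma for the hard direction. -/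
lemma strongEq_key (nO iO : R → R) (ltR : R → R → Prop)
    {P1 P2 : Set (Rule P R)} (hSE : StrongEq nO iO ltR P1 P2)
    (I : HTI (GAtom P R)) (h1 : progSat nO iO ltR Set.univ P1 I .H)
    (h2 : ¬ progSat nO iO ltR Set.univ P2 I .H) : False := by
  set Itot : HTI (GAtom P R) := ⟨I.t, I.t, le_refl I.t⟩ with hItot
  have h1T : progSat nO iO ltR Set.univ P1 Itot .H :=
    (progSat_T_iff nO iO ltR Set.univ I P1).mp
      (progSat_persist nO iO ltR Set.univ P1 h1)
  by_cases hc : progSat nO iO ltR Set.univ P2 Itot .H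
  · -- `(T,T) ⊨ P2`: use facts of `I.h` together with rules over `I.t \ I.h`
    have hne : I.h ≠ I.t := by
      intro he
      apply h2
      have hIe : I = Itot := HTI.ext' he rfl
      rw [hIe]; exact hc
    set Pr : Set (Rule P R) :=
      {r | ∃ a ∈ I.h, r = factRule a} ∪
        {r | ∃ a ∈ I.t, a ∉ I.h ∧ ∃ b ∈ I.t, b ∉ I.h ∧ r = implRule a b}
      with hPr
    have hEq2 : EqModel nO iO ltR Set.univ (P2 ∪ Pr) I.t := by
      constructor
      · rw [progSat_union]
        refine ⟨hc, ?_⟩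
        rintro r (⟨a, ha, rfl⟩ | ⟨a, hat, hah, b, hbt, hbh, rfl⟩)
        · exact (rsat_factRule nO iO ltR a Itot).mpr (I.sub ha)
        · exact (rsat_implRule nO iO ltR a b Itot).mpr
            ⟨fun _ => hat, fun _ => hat⟩
      · intro J' hsub hne' hsat
        rw [progSat_union] at hsat
        obtain ⟨hs2, hsP⟩ := hsat
        have hfacts : I.h ⊆ J' := by
          intro a ha
          exact (rsat_factRule nO iO ltR a ⟨J', I.t, hsub⟩).mp
            (hsP (factRule a) (Or.inl ⟨a, ha, rfl⟩))
        by_cases hb : ∃ b ∈ I.t, b ∉ I.h ∧ b ∈ J'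
        · obtain ⟨b, hbt, hbh, hbJ⟩ := hb
          have hall : ∀ a ∈ I.t, a ∉ I.h → a ∈ J' := by
            intro a hat hah
            exact ((rsat_implRule nO iO ltR a b ⟨J', I.t, hsub⟩).mp
              (hsP (implRule a b)
                (Or.inr ⟨a, hat, hah, b, hbt, hbh, rfl⟩))).1 hbJ
          have hts : I.t ⊆ J' := by
            intro a hat
            by_cases hah : a ∈ I.h
            · exact hfacts hah
            · exact hall a hat hah
          exact hne' (subset_antisymm hsub hts)
        · push_neg at hb
          have hJh : J' = I.h := by
            refine subset_antisymm ?_ hfacts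
            intro x hx
            by_contra hxh
            exact hb x (hsub hx) hxh hx
          apply h2
          have hIe : (⟨J', I.t, hsub⟩ : HTI (GAtom P R)) = I :=
            HTI.ext' hJh rfl
          rwa [hIe] at hs2
    have hEq1 : EqModel nO iO ltR Set.univ (P1 ∪ Pr) I.t :=
      (hSE Pr I.t).mpr hEq2
    apply hEq1.2 I.h I.sub hne
    rw [progSat_union]
    constructor
    · exact h1
    · rintro r (⟨a, ha, rfl⟩ | ⟨a, hat, hah, b, hbt, hbh, rfl⟩)
      · exact (rsat_factRule nO iO ltR a ⟨I.h, I.t, I.sub⟩).mpr ha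
      · exact (rsat_implRule nO iO ltR a b ⟨I.h, I.t, I.sub⟩).mpr
          ⟨fun hbh' => absurd hbh' hbh, fun _ => hat⟩
  · -- `(T,T) ⊭ P2`: use the facts of `I.t`
    set Pr : Set (Rule P R) := {r | ∃ a ∈ I.t, r = factRule a} with hPr
    have hEq1 : EqModel nO iO ltR Set.univ (P1 ∪ Pr) I.t := by
      constructor
      · rw [progSat_union]
        refine ⟨h1T, ?_⟩
        rintro r ⟨a, ha, rfl⟩
        exact (rsat_factRule nO iO ltR a Itot).mpr ha
      · intro J' hsub hne' hsat
        rw [progSat_union] at hsat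
        have hts : I.t ⊆ J' := by
          intro a ha
          exact (rsat_factRule nO iO ltR a ⟨J', I.t, hsub⟩).mp
            (hsat.2 (factRule a) ⟨a, ha, rfl⟩)
        exact hne' (subset_antisymm hsub hts)
    have hEq2 : EqModel nO iO ltR Set.univ (P2 ∪ Pr) I.t :=
      (hSE Pr I.t).mp hEq1
    exact hc ((progSat_union nO iO ltR Set.univ P2 Pr Itot .H).mp hEq2.1).1

end Aux

/-- **Strong Equivalence Characterisation**: two `AC`-programs `Π₁` and `Π₂`
    (over a common semiring signature) are strongly equivalent iff they have the
    same HT-models, i.e. the same satisfying pointed HT-interpretations. -/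
theorem strong_equivalence_characterisation {P R : Type} [Semiring R]
    (nO iO : R → R) (ltR : R → R → Prop) (P1 P2 : Set (Rule P R)) :
    StrongEq nO iO ltR P1 P2 ↔
      ∀ (I : HTI (GAtom P R)) (w : W),
        progSat nO iO ltR Set.univ P1 I w ↔ progSat nO iO ltR Set.univ P2 I w := by
  constructor
  · intro hSE
    have hSE' : StrongEq nO iO ltR P2 P1 := fun Pr J => (hSE Pr J).symm
    have hH : ∀ I : HTI (GAtom P R),
        progSat nO iO ltR Set.univ P1 I .H ↔ progSat nO iO ltR Set.univ P2 I .H := by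
      intro I
      constructor
      · intro h1
        by_contra h2
        exact strongEq_key nO iO ltR hSE I h1 h2
      · intro h1
        by_contra h2
        exact strongEq_key nO iO ltR hSE' I h1 h2
    intro I w
    cases w with
    | H => exact hH I
    | T =>
      rw [progSat_T_iff nO iO ltR Set.univ I P1, progSat_T_iff nO iO ltR Set.univ I P2]
      exact hH _
  · intro hHT Pr J
    have e : ∀ (J' : Set (GAtom P R)) (h : J' ⊆ J),
        progSat nO iO ltR Set.univ (P1 ∪ Pr) ⟨J', J, h⟩ .H ↔
          progSat nO iO ltR Set.univ (P2 ∪ Pr) ⟨J', J, h⟩ .H := by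
      intro J' h
      rw [progSat_union, progSat_union, hHT ⟨J', J, h⟩ .H]
    constructor
    · rintro ⟨hs, hmin⟩
      exact ⟨(e J (le_refl J)).mp hs,
        fun J' h hne hs' => hmin J' h hne ((e J' h).mpr hs')⟩
    · rintro ⟨hs, hmin⟩
      exact ⟨(e J (le_refl J)).mpr hs,
        fun J' h hne hs' => hmin J' h hne ((e J' h).mp hs')⟩
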